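/- Fix integers a > 0, b ≥ 0 and write b = ra + b' with 0 ≤ b' < a. Let Z, Z' be multisets of nonnegative integers of the same cardinality and same sum, with Z ⊴ Z', satisfying: all entries lie in (aℤ) ∪ (b' + aℤ), and if b' = 0 no entry is repeated more than twice, while if b' > 0 all entries are distinct. Let t be large enough that the conjugates Z̄ and Z̄' are defined as the complements of {ta+b'−z : z ∈ Z} (resp. for Z') in the multiset {0, a, 2a, …, ta, b', a+b', …, ta+b'}. Then Z̄' ⊴ Z̄. -/

import Mathlib

/-- Decreasing enumeration of a multiset of natural numbers. -/
def dsort (M : Multiset ℕ) : List ℕ := (M.sort (· ≤ ·)).reverse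

/-- Dominance order on multisets of naturals (same size, same sum). -/
def MDom (M M' : Multiset ℕ) : Prop :=
  ∀ d, ((dsort M).take d).sum ≤ ((dsort M').take d).sum

/-- The ambient multiset {0, a, 2a, …, ta, b', a+b', …, ta+b'}. -/
def ambient (a b' t : ℕ) : Multiset ℕ :=
  ((Finset.range (t + 1)).val.map (· * a)) +
  ((Finset.range (t + 1)).val.map fun i => i * a + b')

def fc (x : ℕ) (M : Multiset ℕ) : ℕ := (M.map (fun m => m - x)).sum

lemma dsort_coe (M : Multiset ℕ) : (↑(dsort M) : Multiset ℕ) = M := by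
  simp [dsort]

lemma dsort_sorted (M : Multiset ℕ) : (dsort M).Pairwise (fun a b => b ≤ a) := by
  have := Multiset.pairwise_sort M (· ≤ ·)
  simpa [dsort, List.pairwise_reverse, flip] using this

lemma dsort_sum (M : Multiset ℕ) : (dsort M).sum = M.sum := by
  conv_rhs => rw [← dsort_coe M]
  simp

lemma fc_eq (x : ℕ) (M : Multiset ℕ) :
    fc x M = ((dsort M).map (fun m => m - x)).sum := by
  rw [fc]
  conv_lhs => rw [← dsort_coe M]
  simp

lemma take_le_fc (l : List ℕ) (x : ℕ) :
    ∀ d, (l.take d).sum ≤ (l.map (fun m => m - x)).sum + d * x := by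
  induction l with
  | nil => intro d; simp
  | cons a l ih =>
    intro d
    cases d with
    | zero => simp
    | succ e =>
      have h1 := ih e
      simp only [List.take_succ_cons, List.sum_cons, List.map_cons, Nat.succ_mul]
      omega

lemma exists_d (l : List ℕ) (hl : l.Pairwise (fun a b => b ≤ a)) (x : ℕ) :
    ∃ d ≤ l.length, (l.map (fun m => m - x)).sum + d * x ≤ (l.take d).sum := by
  induction l with
  | nil => exact ⟨0, le_refl _, by simp⟩
  | cons a l ih =>
    rw [List.pairwise_cons] at hl
    rcases ih hl.2 with ⟨d, hd, hle⟩
    by_cases hax : a ≤ x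
    · refine ⟨0, Nat.zero_le _, ?_⟩
      have : ((a :: l).map (fun m => m - x)).sum = 0 := by
        apply List.sum_eq_zero
        intro y hy
        rcases List.mem_map.1 hy with ⟨m, hm, rfl⟩
        rcases List.mem_cons.1 hm with rfl | hm
        · omega
        · have := hl.1 m hm; omega
      simp only [List.take_zero, List.sum_nil, Nat.zero_mul]
      omega
    · refine ⟨d + 1, by simpa using Nat.succ_le_succ hd, ?_⟩
      simp only [List.take_succ_cons, List.sum_cons, List.map_cons, Nat.succ_mul]
      omega

lemma exists_x (l : List ℕ) (hl : l.Pairwise (fun a b => b ≤ a)) :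
    ∀ d ≤ l.length, ∃ x,
      ((l.map (fun m => m - x)).sum + d * x ≤ (l.take d).sum)
      ∧ (x ≤ l.headI ∨ l = []) := by
  induction l with
  | nil =>
    intro d hd
    rw [List.length_nil, Nat.le_zero] at hd
    subst hd
    exact ⟨0, by simp, Or.inr rfl⟩
  | cons a l ih =>
    rw [List.pairwise_cons] at hl
    intro d hd
    cases d with
    | zero =>
      refine ⟨a, ?_, Or.inl (le_refl _)⟩
      have : ((a :: l).map (fun m => m - a)).sum = 0 := by
        apply List.sum_eq_zero
        intro y hy
        rcases List.mem_map.1 hy with ⟨m, hm, rfl⟩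
        rcases List.mem_cons.1 hm with rfl | hm
        · omega
        · have := hl.1 m hm; omega
      simp only [List.take_zero, List.sum_nil, Nat.zero_mul]
      omega
    | succ e =>
      have he : e ≤ l.length := by simpa using hd
      rcases ih hl.2 e he with ⟨x, hx, hside⟩
      rcases hside with hxh | rfl
      · have hxa : x ≤ a := by
          rcases l with _ | ⟨b, l⟩
          · simp at hxh; omega
          · have hb := hl.1 b List.mem_cons_self
            simp only [List.headI] at hxh
            omega
        refine ⟨x, ?_, Or.inl hxa⟩
        simp only [List.take_succ_cons, List.sum_cons, List.map_cons, Nat.succ_mul]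
        omega
      · -- l = [], so e = 0, d = 1
        simp only [List.length_nil, Nat.le_zero] at he
        subst he
        exact ⟨a, by simp, Or.inl (le_refl _)⟩

lemma fc_of_MDom {M M' : Multiset ℕ} (h : MDom M M') (x : ℕ) :
    fc x M ≤ fc x M' := by
  rcases exists_d (dsort M) (dsort_sorted M) x with ⟨d, hd, hle⟩
  have h1 := h d
  have h2 := take_le_fc (dsort M') x d
  rw [fc_eq, fc_eq]
  omega

lemma MDom_of_fc {M M' : Multiset ℕ} (hsum : M.sum = M'.sum)
    (h : ∀ x, fc x M ≤ fc x M') : MDom M M' := by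
  intro d
  by_cases hd : d ≤ (dsort M').length
  · rcases exists_x (dsort M') (dsort_sorted M') d hd with ⟨x, hx, _⟩
    have h1 := take_le_fc (dsort M) x d
    have h2 := h x
    rw [fc_eq, fc_eq] at h2
    omega
  · rw [List.take_of_length_le (le_of_not_ge hd)]
    have h1 : ((dsort M).take d).sum ≤ (dsort M).sum := by
      conv_rhs => rw [← List.take_append_drop d (dsort M)]
      rw [List.sum_append]
      omega
    rw [dsort_sum M'] at *
    rw [dsort_sum M] at h1
    omega

lemma sum_map_refl (N : ℕ) (Z : Multiset ℕ) (h : ∀ z ∈ Z, z ≤ N) :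
    (Z.map (fun z => N - z)).sum + Z.sum = Multiset.card Z * N := by
  induction Z using Multiset.induction with
  | empty => simp
  | cons a s ih =>
    have ha := h a (Multiset.mem_cons_self a s)
    have hs := ih (fun z hz => h z (Multiset.mem_cons_of_mem hz))
    simp only [Multiset.map_cons, Multiset.sum_cons, Multiset.card_cons, Nat.succ_mul]
    omega

lemma fc_map_refl (N x : ℕ) (Z : Multiset ℕ) (h : ∀ z ∈ Z, z ≤ N) (hx : x ≤ N) :
    fc x (Z.map (fun z => N - z)) + Z.sum
      = fc (N - x) Z + Multiset.card Z * (N - x) := by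
  induction Z using Multiset.induction with
  | empty => simp [fc]
  | cons a s ih =>
    have ha := h a (Multiset.mem_cons_self a s)
    have hs := ih (fun z hz => h z (Multiset.mem_cons_of_mem hz))
    simp only [fc, Multiset.map_cons, Multiset.map_map, Function.comp,
      Multiset.sum_cons, Multiset.card_cons, Nat.succ_mul] at *
    omega

lemma fc_eq_zero {x : ℕ} {M : Multiset ℕ} (h : ∀ m ∈ M, m ≤ x) : fc x M = 0 := by
  apply Multiset.sum_eq_zero
  intro y hy
  rcases Multiset.mem_map.1 hy with ⟨m, hm, rfl⟩
  have := h m hm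
  omega

lemma fc_sub (A R : Multiset ℕ) (h : R ≤ A) (x : ℕ) :
    fc x (A - R) + fc x R = fc x A := by
  unfold fc
  rw [← Multiset.sum_add, ← Multiset.map_add]
  congr 2
  exact tsub_add_cancel_of_le h

theorem conjugation_reverses_dominance (a b r b' t : ℕ)
    (ha : 0 < a) (hb : b = r * a + b') (hb'a : b' < a)
    (Z Z' : Multiset ℕ)
    (hcard : Multiset.card Z = Multiset.card Z') (hsum : Z.sum = Z'.sum)
    (hmodZ : ∀ z ∈ Z, z % a = 0 ∨ z % a = b')
    (hmodZ' : ∀ z ∈ Z', z % a = 0 ∨ z % a = b')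
    (hrep0 : b' = 0 → (∀ v, Z.count v ≤ 2) ∧ (∀ v, Z'.count v ≤ 2))
    (hrep1 : 0 < b' → Z.Nodup ∧ Z'.Nodup)
    (hzb : ∀ z ∈ Z, z ≤ t * a + b') (hzb' : ∀ z ∈ Z', z ≤ t * a + b')
    (htZ : Z.map (fun z => t * a + b' - z) ≤ ambient a b' t)
    (htZ' : Z'.map (fun z => t * a + b' - z) ≤ ambient a b' t)
    (hdom : MDom Z Z') :
    MDom (ambient a b' t - Z'.map (fun z => t * a + b' - z))
      (ambient a b' t - Z.map (fun z => t * a + b' - z)) := by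
  set N := t * a + b' with hN
  set A := ambient a b' t with hA
  set R := Z.map (fun z => N - z) with hR
  set R' := Z'.map (fun z => N - z) with hR'
  -- sums of the reflections agree
  have hsR : R.sum + Z.sum = Multiset.card Z * N := sum_map_refl N Z hzb
  have hsR' : R'.sum + Z'.sum = Multiset.card Z' * N := sum_map_refl N Z' hzb'
  have hsumRR : R.sum = R'.sum := by
    rw [hcard] at hsR; omega
  -- sums of complements agree
  have hAsub : (A - R).sum + R.sum = A.sum := by
    conv_rhs => rw [← tsub_add_cancel_of_le htZ]
    rw [Multiset.sum_add]
  have hAsub' : (A - R').sum + R'.sum = A.sum := by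
    conv_rhs => rw [← tsub_add_cancel_of_le htZ']
    rw [Multiset.sum_add]
  apply MDom_of_fc (by omega)
  intro x
  -- key: fc x R ≤ fc x R'
  have hRR' : fc x R ≤ fc x R' := by
    by_cases hx : x ≤ N
    · have h1 := fc_map_refl N x Z hzb hx
      have h2 := fc_map_refl N x Z' hzb' hx
      have h3 := fc_of_MDom hdom (N - x)
      rw [← hR] at h1
      rw [← hR'] at h2
      rw [hcard] at h1
      omega
    · have h1 : fc x R = 0 := by
        apply fc_eq_zero
        intro m hm
        rcases Multiset.mem_map.1 hm with ⟨z, hz, rfl⟩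
        omega
      have h2 : fc x R' = 0 := by
        apply fc_eq_zero
        intro m hm
        rcases Multiset.mem_map.1 hm with ⟨z, hz, rfl⟩
        omega
      omega
  have e1 := fc_sub A R htZ x
  have e2 := fc_sub A R' htZ' x
  omega
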